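/- arXiv:2512.14705 — 2 statements merged into one kernel-verified Lean document; each statement's English description precedes it below -/
import Mathlib

section
/- Let n be a positive integer, let w be symmetric nonnegative weights on {1,…,n}, let p ≥ 2, and let Δ_p be the associated graph p-Laplacian. Then the operator I + Δ_p is a bijection, i.e., Δ_p is maximal monotone on ℝⁿ: for every b ∈ ℝⁿ there exists a unique u ∈ ℝⁿ such that u + Δ_p u = b. -/
open Real Finset
open scoped RealInnerProductSpace

/-- The graph `p`-Laplacian on a weighted graph with `n` nodes:
`(Δ_p u)_i = Σ_j w i j * |u_i - u_j|^(p-2) (u_i - u_j)`, where the real power is `rpow`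
(so that `|x|^(p-2) x = 0` when `x = 0`, for any `p`). -/
noncomputable def graphPLap {n : ℕ} (w : Fin n → Fin n → ℝ) (p : ℝ)
    (u : EuclideanSpace ℝ (Fin n)) : EuclideanSpace ℝ (Fin n) :=
  WithLp.toLp 2 (fun i => ∑ j, w i j * (|u i - u j| ^ (p - 2) * (u i - u j)))



private lemma phi_mono' {p : ℝ} (hp : 2 ≤ p) : Monotone (fun x : ℝ => |x| ^ (p - 2) * x) := by
  have hq : (0:ℝ) ≤ p - 2 := by linarith
  have key : ∀ a b : ℝ, 0 ≤ a → a ≤ b → |a| ^ (p-2) * a ≤ |b| ^ (p-2) * b := by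
    intro a b ha hab
    have hb : 0 ≤ b := le_trans ha hab
    rw [abs_of_nonneg ha, abs_of_nonneg hb]
    exact mul_le_mul (Real.rpow_le_rpow ha hab hq) hab ha (Real.rpow_nonneg hb _)
  intro a b hab
  rcases le_or_gt 0 a with ha | ha
  · exact key a b ha hab
  rcases le_or_gt b 0 with hb | hb
  · have h := key (-b) (-a) (by linarith) (by linarith)
    simp only [abs_neg] at h
    show |a| ^ (p - 2) * a ≤ |b| ^ (p - 2) * b
    nlinarith [h]
  · have h1 : |a| ^ (p-2) * a ≤ 0 :=
      mul_nonpos_of_nonneg_of_nonpos (Real.rpow_nonneg (abs_nonneg a) _) ha.le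
    have h2 : (0:ℝ) ≤ |b| ^ (p-2) * b :=
      mul_nonneg (Real.rpow_nonneg (abs_nonneg b) _) hb.le
    simpa using h1.trans h2

private lemma phi_odd' (p : ℝ) (x : ℝ) : |(-x)| ^ (p-2) * (-x) = -(|x| ^ (p-2) * x) := by
  rw [abs_neg]; ring

private lemma myHasDerivAt_absRpow' {p : ℝ} (hp : 2 ≤ p) (x : ℝ) :
    HasDerivAt (fun y : ℝ => |y| ^ p) (p * (|x| ^ (p - 2) * x)) x := by
  have h1 : HasDerivAt (fun y : ℝ => y ^ 2) (2 * x) x := by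
    simpa using hasDerivAt_pow 2 x
  have h2 : HasDerivAt (fun z : ℝ => z ^ (p/2)) (p/2 * (x^2) ^ (p/2 - 1)) (x^2) :=
    Real.hasDerivAt_rpow_const (Or.inr (by linarith))
  have h3 : HasDerivAt ((fun z : ℝ => z ^ (p/2)) ∘ (fun y : ℝ => y ^ 2))
      (p/2 * (x^2) ^ (p/2 - 1) * (2 * x)) x :=
    HasDerivAt.comp (h := fun y : ℝ => y ^ 2) (h₂ := fun z : ℝ => z ^ (p/2)) x h2 h1
  have habs : ∀ y : ℝ, ((y:ℝ)^2) ^ (p/2) = |y| ^ p := by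
    intro y
    rw [← sq_abs, ← Real.rpow_natCast |y| 2, ← Real.rpow_mul (abs_nonneg y)]
    congr 1
    push_cast
    ring
  have hfun : (fun y : ℝ => |y| ^ p) = (fun z : ℝ => z ^ (p/2)) ∘ (fun y : ℝ => y ^ 2) := by
    funext y; simp [Function.comp, habs y]
  have hd : p/2 * (x^2) ^ (p/2 - 1) * (2 * x) = p * (|x| ^ (p - 2) * x) := by
    have h4 : ((x:ℝ)^2) ^ (p/2 - 1) = |x| ^ (p - 2) := by
      rw [← sq_abs, ← Real.rpow_natCast |x| 2, ← Real.rpow_mul (abs_nonneg x)]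
      congr 1; push_cast; ring
    rw [h4]; ring
  rw [hfun]
  exact hd ▸ h3

private lemma sum_antisym' {n : ℕ} (w : Fin n → Fin n → ℝ) (hsym : ∀ i j, w i j = w j i)
    (g : Fin n → Fin n → ℝ) (hg : ∀ i j, g i j = - g j i) (c : Fin n → ℝ) :
    ∑ i, ∑ j, w i j * g i j * (c i - c j) = 2 * ∑ i, c i * ∑ j, w i j * g i j := by
  have h1 : ∑ i, ∑ j, w i j * g i j * c j = ∑ i, ∑ j, w j i * g j i * c i := by
    rw [Finset.sum_comm]
  have h2 : ∑ i, ∑ j, w i j * g i j * c j = ∑ i, ∑ j, -(w i j * g i j * c i) := by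
    rw [h1]
    exact Finset.sum_congr rfl fun i _ => Finset.sum_congr rfl fun j _ => by
      rw [hsym j i, hg j i]; ring
  have h3 : ∑ i, ∑ j, w i j * g i j * (c i - c j)
      = ∑ i, ∑ j, w i j * g i j * c i - ∑ i, ∑ j, w i j * g i j * c j := by
    simp only [mul_sub, Finset.sum_sub_distrib]
  rw [h3, h2]
  have h4 : ∑ i, ∑ j, -(w i j * g i j * c i) = - ∑ i, ∑ j, w i j * g i j * c i := by
    simp
  rw [h4, sub_neg_eq_add, ← two_mul]
  congr 1
  exact Finset.sum_congr rfl fun i _ => by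
    rw [Finset.mul_sum]
    exact Finset.sum_congr rfl fun j _ => by ring

private lemma lap_mono {n : ℕ} (w : Fin n → Fin n → ℝ) (hsym : ∀ i j, w i j = w j i)
    (hw : ∀ i j, 0 ≤ w i j) {p : ℝ} (hp : 2 ≤ p) (u v : EuclideanSpace ℝ (Fin n)) :
    0 ≤ ⟪graphPLap w p u - graphPLap w p v, u - v⟫ := by
  set g : Fin n → Fin n → ℝ := fun i j =>
    |u i - u j| ^ (p-2) * (u i - u j) - |v i - v j| ^ (p-2) * (v i - v j) with hgdef
  set c : Fin n → ℝ := fun i => u i - v i with hcdef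
  have hg : ∀ i j, g i j = - g j i := by
    intro i j
    simp only [hgdef]
    rw [show u j - u i = -(u i - u j) by ring, show v j - v i = -(v i - v j) by ring,
      phi_odd', phi_odd']
    ring
  have hterm : ∀ i j, 0 ≤ w i j * g i j * (c i - c j) := by
    intro i j
    have hmono := phi_mono' hp
    have hdiff : c i - c j = (u i - u j) - (v i - v j) := by simp only [hcdef]; ring
    rcases le_total (u i - u j) (v i - v j) with h | h
    · have h1 : g i j ≤ 0 := sub_nonpos.mpr (hmono h)
      have h2 : c i - c j ≤ 0 := by rw [hdiff]; linarith
      exact mul_nonneg_of_nonpos_of_nonpos (mul_nonpos_of_nonneg_of_nonpos (hw i j) h1) h2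
    · have h1 : 0 ≤ g i j := sub_nonneg.mpr (hmono h)
      have h2 : 0 ≤ c i - c j := by rw [hdiff]; linarith
      exact mul_nonneg (mul_nonneg (hw i j) h1) h2
  have hsum := sum_antisym' w hsym g hg c
  have hnn : 0 ≤ ∑ i, ∑ j, w i j * g i j * (c i - c j) :=
    Finset.sum_nonneg fun i _ => Finset.sum_nonneg fun j _ => hterm i j
  have hinner : ⟪graphPLap w p u - graphPLap w p v, u - v⟫ = ∑ i, c i * ∑ j, w i j * g i j := by
    simp only [PiLp.inner_apply, RCLike.inner_apply, conj_trivial, PiLp.sub_apply]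
    refine Finset.sum_congr rfl fun i _ => ?_
    have h3 : graphPLap w p u i - graphPLap w p v i = ∑ j, w i j * g i j := by
      simp only [graphPLap, WithLp.ofLp_toLp, hgdef, mul_sub, Finset.sum_sub_distrib]
    rw [h3]
  rw [hinner]
  rw [hsum] at hnn
  linarith

set_option maxHeartbeats 1000000

/-- Maximal monotonicity: I + Δ_p is a bijection on ℝⁿ. -/
theorem graphPLap_maximalMonotone {n : ℕ} (hn : 0 < n) (w : Fin n → Fin n → ℝ)
    (hsym : ∀ i j, w i j = w j i) (hw : ∀ i j, 0 ≤ w i j) (p : ℝ) (hp : 2 ≤ p) :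
    ∀ b : EuclideanSpace ℝ (Fin n), ∃! u : EuclideanSpace ℝ (Fin n),
      u + graphPLap w p u = b := by

  intro b
  classical
  have hp0 : (0:ℝ) < p := by linarith
  set F : EuclideanSpace ℝ (Fin n) → ℝ := fun u =>
    (∑ i, ((1/2) * u i ^ 2 - b i * u i)) + (1/(2*p)) * ∑ i, ∑ j, w i j * |u i - u j| ^ p
    with hF
  have hproj : ∀ (i : Fin n) (u : EuclideanSpace ℝ (Fin n)),
      HasFDerivAt (fun v : EuclideanSpace ℝ (Fin n) => v i)
        (EuclideanSpace.proj (𝕜 := ℝ) i) u := by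
    intro i u
    exact (EuclideanSpace.proj (𝕜 := ℝ) i).hasFDerivAt
  have hderiv : ∀ u : EuclideanSpace ℝ (Fin n),
      HasFDerivAt F ((innerSL ℝ) (u + graphPLap w p u - b)) u := by
    intro u
    have hA : ∀ i : Fin n, HasFDerivAt
        (fun v : EuclideanSpace ℝ (Fin n) => (1/2) * v i ^ 2 - b i * v i)
        ((u i - b i) • (EuclideanSpace.proj (𝕜 := ℝ) i)) u := by
      intro i
      have hq : HasDerivAt (fun t : ℝ => (1/2) * t ^ 2 - b i * t) (u i - b i) (u i) := by
        have h := ((hasDerivAt_pow 2 (u i)).const_mul (1/2 : ℝ)).sub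
          ((hasDerivAt_id (u i)).const_mul (b i))
        have e : (fun t : ℝ => (1/2) * t ^ 2 - b i * t)
            = (fun y : ℝ => 1/2 * y^2) - fun y => b i * id y := by funext t; simp
        rw [e]
        exact h.congr_deriv (by rw [show (2:ℕ) - 1 = 1 from rfl]; push_cast; ring)
      exact HasDerivAt.comp_hasFDerivAt
        (f := fun v : EuclideanSpace ℝ (Fin n) => v i) u hq (hproj i u)
    have hB : ∀ i j : Fin n, HasFDerivAt
        (fun v : EuclideanSpace ℝ (Fin n) => w i j * |v i - v j| ^ p)
        ((w i j * (p * (|u i - u j| ^ (p-2) * (u i - u j)))) •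
          (EuclideanSpace.proj (𝕜 := ℝ) i - EuclideanSpace.proj (𝕜 := ℝ) j)) u := by
      intro i j
      have hlin : HasFDerivAt (fun v : EuclideanSpace ℝ (Fin n) => v i - v j)
          (EuclideanSpace.proj (𝕜 := ℝ) i - EuclideanSpace.proj (𝕜 := ℝ) j) u :=
        (hproj i u).sub (hproj j u)
      have habs := myHasDerivAt_absRpow' hp (u i - u j)
      have hcomp := HasDerivAt.comp_hasFDerivAt
        (f := fun v : EuclideanSpace ℝ (Fin n) => v i - v j) u habs hlin
      have hc := hcomp.const_mul (w i j)
      rw [smul_smul] at hc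
      exact hc
    have hsum1 : HasFDerivAt
        (fun v : EuclideanSpace ℝ (Fin n) => ∑ i, ((1/2) * v i ^ 2 - b i * v i))
        (∑ i, (u i - b i) • EuclideanSpace.proj (𝕜 := ℝ) i) u :=
      HasFDerivAt.fun_sum fun i _ => hA i
    have hsum2 : HasFDerivAt
        (fun v : EuclideanSpace ℝ (Fin n) => ∑ i, ∑ j, w i j * |v i - v j| ^ p)
        (∑ i, ∑ j, (w i j * (p * (|u i - u j| ^ (p-2) * (u i - u j)))) •
          (EuclideanSpace.proj (𝕜 := ℝ) i - EuclideanSpace.proj (𝕜 := ℝ) j)) u :=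
      HasFDerivAt.fun_sum fun i _ => HasFDerivAt.fun_sum fun j _ => hB i j
    have htot := hsum1.add (hsum2.const_mul (1/(2*p)))
    have hLeq : (innerSL ℝ) (u + graphPLap w p u - b) =
        (∑ i, (u i - b i) • EuclideanSpace.proj (𝕜 := ℝ) i) +
        (1/(2*p)) • (∑ i, ∑ j, (w i j * (p * (|u i - u j| ^ (p-2) * (u i - u j)))) •
          (EuclideanSpace.proj (𝕜 := ℝ) i - EuclideanSpace.proj (𝕜 := ℝ) j)) := by
      apply ContinuousLinearMap.ext
      intro v
      simp only [ContinuousLinearMap.add_apply, ContinuousLinearMap.smul_apply,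
        ContinuousLinearMap.coe_sum', Finset.sum_apply, ContinuousLinearMap.sub_apply,
        PiLp.proj_apply, innerSL_apply_apply, smul_eq_mul]
      have hgg : ∀ i j : Fin n, (fun i j => |u i - u j| ^ (p-2) * (u i - u j)) i j
          = - (fun i j => |u i - u j| ^ (p-2) * (u i - u j)) j i := by
        intro i j
        simp only
        rw [show u j - u i = -(u i - u j) by ring, phi_odd']
        ring
      have key := sum_antisym' w hsym
        (fun i j => |u i - u j| ^ (p-2) * (u i - u j)) hgg v
      have e1 : ∑ x : Fin n, ∑ y : Fin n,
            w x y * (p * (|u x - u y| ^ (p - 2) * (u x - u y))) * (v x - v y)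
          = p * ∑ x : Fin n, ∑ y : Fin n,
            w x y * (|u x - u y| ^ (p - 2) * (u x - u y)) * (v x - v y) := by
        rw [Finset.mul_sum]
        exact Finset.sum_congr rfl fun i _ => by
          rw [Finset.mul_sum]
          exact Finset.sum_congr rfl fun j _ => by ring
      have e2 : (inner ℝ (u + graphPLap w p u - b) v : ℝ)
          = ∑ i : Fin n, (u i + graphPLap w p u i - b i) * v i := by
        simp [PiLp.inner_apply, RCLike.inner_apply, PiLp.sub_apply, PiLp.add_apply, mul_comm]
      have e3 : ∀ i, graphPLap w p u i
          = ∑ j, w i j * (|u i - u j| ^ (p-2) * (u i - u j)) := fun i => rfl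
      rw [e2, e1, key]
      have e4 : 1 / (2*p) * (p * (2 * ∑ i : Fin n, v i * ∑ j : Fin n,
            w i j * (|u i - u j| ^ (p-2) * (u i - u j))))
          = ∑ i : Fin n, v i * ∑ j : Fin n,
            w i j * (|u i - u j| ^ (p-2) * (u i - u j)) := by
        field_simp
      rw [e4, ← Finset.sum_add_distrib]
      exact Finset.sum_congr rfl fun i _ => by rw [e3 i]; ring
    rw [hF]
    rw [hLeq]
    exact htot
  have hcont : Continuous F := by
    have hdiff : Differentiable ℝ F := fun u => (hderiv u).differentiableAt
    exact hdiff.continuous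
  have hS : ∀ u : EuclideanSpace ℝ (Fin n),
      0 ≤ ∑ i, ∑ j, w i j * |u i - u j| ^ p :=
    fun u => Finset.sum_nonneg fun i _ => Finset.sum_nonneg fun j _ =>
      mul_nonneg (hw i j) (Real.rpow_nonneg (abs_nonneg _) _)
  have hlb : ∀ u : EuclideanSpace ℝ (Fin n), (1/2) * ‖u‖^2 - ‖b‖ * ‖u‖ ≤ F u := by
    intro u
    have h1 : ∑ i, ((1/2) * u i ^ 2 - b i * u i) = (1/2) * ⟪u, u⟫ - ⟪b, u⟫ := by
      simp only [PiLp.inner_apply, RCLike.inner_apply, conj_trivial, Finset.mul_sum,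
        ← Finset.sum_sub_distrib]
      exact Finset.sum_congr rfl fun i _ => by ring
    have h2 : (⟪u, u⟫ : ℝ) = ‖u‖^2 := real_inner_self_eq_norm_sq u
    have h3 : (⟪b, u⟫ : ℝ) ≤ ‖b‖ * ‖u‖ := real_inner_le_norm b u
    have h4 : 0 ≤ 1/(2*p) * ∑ i, ∑ j, w i j * |u i - u j| ^ p :=
      mul_nonneg (by positivity) (hS u)
    rw [hF]
    simp only
    rw [h1, h2]
    linarith
  set R : ℝ := 2*‖b‖ + 2*|F 0| + 2 with hR
  have hR0 : (0:ℝ) < R := by positivity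
  obtain ⟨u, humem, humin⟩ :=
    (isCompact_closedBall (0 : EuclideanSpace ℝ (Fin n)) R).exists_isMinOn
      ⟨0, Metric.mem_closedBall_self hR0.le⟩ hcont.continuousOn
  have hglobal : ∀ v, F u ≤ F v := by
    intro v
    rcases le_or_gt ‖v‖ R with h | h
    · exact humin (by simpa [Metric.mem_closedBall, dist_zero_right] using h)
    · have h0 : F u ≤ F 0 := humin (Metric.mem_closedBall_self hR0.le)
      have h2 := hlb v
      have hb0 : (0:ℝ) ≤ ‖b‖ := norm_nonneg b
      have habs : F 0 ≤ |F 0| := le_abs_self _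
      have habs0 : (0:ℝ) ≤ |F 0| := abs_nonneg _
      have hv0 : (0:ℝ) ≤ ‖v‖ := norm_nonneg v
      have hvpos : (0:ℝ) < ‖v‖ := lt_trans hR0 h
      have hFv : F 0 < F v := by
        clear_value F
        have h1R : R ≥ 2 := by rw [hR]; nlinarith
        have hRv : ‖v‖ * R = 2 * ‖b‖ * ‖v‖ + 2 * |F 0| * ‖v‖ + 2 * ‖v‖ := by rw [hR]; ring
        nlinarith [mul_lt_mul_of_pos_left h hvpos, hRv,
          mul_nonneg (by nlinarith : (0:ℝ) ≤ ‖v‖ - 1) habs0]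
      linarith
  have hloc : IsLocalMin F u := Filter.Eventually.of_forall hglobal
  have h0 : fderiv ℝ F u = 0 := hloc.fderiv_eq_zero
  have hL0 : (innerSL ℝ) (u + graphPLap w p u - b) = 0 := by
    rw [← (hderiv u).fderiv]
    exact h0
  have heq : u + graphPLap w p u - b = 0 := by
    have h1 : (⟪u + graphPLap w p u - b, u + graphPLap w p u - b⟫ : ℝ) = 0 := by
      have h2 := ContinuousLinearMap.ext_iff.mp hL0 (u + graphPLap w p u - b)
      simpa only [innerSL_apply_apply, ContinuousLinearMap.zero_apply] using h2
    exact inner_self_eq_zero.mp h1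
  refine ⟨u, sub_eq_zero.mp heq, ?_⟩
  intro v hv
  have hu' : u + graphPLap w p u = b := sub_eq_zero.mp heq
  have hmono := lap_mono w hsym hw hp v u
  have hzero : (⟪(v + graphPLap w p v) - (u + graphPLap w p u), v - u⟫ : ℝ) = 0 := by
    rw [hv, hu']
    simp
  have hre : (v + graphPLap w p v) - (u + graphPLap w p u)
      = (v - u) + (graphPLap w p v - graphPLap w p u) := by abel
  rw [hre, inner_add_left] at hzero
  have hself : (⟪v - u, v - u⟫ : ℝ) = ‖v - u‖^2 := real_inner_self_eq_norm_sq _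
  have hnorm : ‖v - u‖^2 ≤ 0 := by linarith
  have : v - u = 0 := by
    have := norm_eq_zero.mp (by nlinarith [norm_nonneg (v - u), sq_nonneg ‖v - u‖] : ‖v - u‖ = 0)
    exact this
  exact sub_eq_zero.mp this
end

section
/- Let n be a positive integer, let w be symmetric nonnegative weights on {1,…,n}, let p ≥ 2, and let Δ_p be the associated graph p-Laplacian. Let F : ℝⁿ → ℝⁿ and C_F ∈ ℝ satisfy the one-sided Lipschitz (monotonicity) condition ⟨F(a) − F(b), a − b⟩ ≤ C_F ‖a − b‖² for all a, b ∈ ℝⁿ. If u, v : ℝ → ℝⁿ are differentiable and both satisfy x′(t) = −Δ_p x(t) + F(x(t)) for all t ≥ 0, then solutions depend continuously on initial data: ‖u(t) − v(t)‖ ≤ e^{C_F t} ‖u(0) − v(0)‖ for all t ≥ 0. -/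
open Real Finset
open scoped RealInnerProductSpace

noncomputable def phiP (p t : ℝ) : ℝ := |t| ^ (p - 2) * t

lemma phiP_neg (p t : ℝ) : phiP p (-t) = - phiP p t := by
  simp [phiP, abs_neg, mul_neg]

lemma phiP_mono {p : ℝ} (hp : 2 ≤ p) : Monotone (phiP p) := by
  have h2 : 0 ≤ p - 2 := by linarith
  have base : ∀ x y : ℝ, 0 ≤ y → y ≤ x → phiP p y ≤ phiP p x := by
    intro x y hy hxy
    have hx : 0 ≤ x := hy.trans hxy
    simp only [phiP, abs_of_nonneg hx, abs_of_nonneg hy]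
    exact mul_le_mul (Real.rpow_le_rpow hy hxy h2) hxy hy (Real.rpow_nonneg hx _)
  intro y x hxy
  rcases le_or_gt 0 y with hy | hy
  · exact base x y hy hxy
  · rcases le_or_gt x 0 with hx | hx
    · have := base (-y) (-x) (by linarith) (by linarith)
      rw [phiP_neg, phiP_neg] at this; linarith
    · have h1 : phiP p y ≤ 0 :=
        mul_nonpos_of_nonneg_of_nonpos (Real.rpow_nonneg (abs_nonneg _) _) hy.le
      have h2' : 0 ≤ phiP p x :=
        mul_nonneg (Real.rpow_nonneg (abs_nonneg _) _) hx.le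
      linarith

lemma phiP_key {p : ℝ} (hp : 2 ≤ p) (x y : ℝ) : 0 ≤ (phiP p x - phiP p y) * (x - y) := by
  rcases le_total y x with h | h
  · exact mul_nonneg (by linarith [phiP_mono hp h]) (by linarith)
  · nlinarith [phiP_mono hp h]

lemma graphPLap_monotone {n : ℕ} (w : Fin n → Fin n → ℝ)
    (hsym : ∀ i j, w i j = w j i) (hw : ∀ i j, 0 ≤ w i j) {p : ℝ} (hp : 2 ≤ p)
    (a b : EuclideanSpace ℝ (Fin n)) :
    0 ≤ ⟪graphPLap w p a - graphPLap w p b, a - b⟫ := by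
  set T : Fin n → Fin n → ℝ :=
    fun i j => w i j * (phiP p (a i - a j) - phiP p (b i - b j)) * (a i - b i) with hT
  have hinner : ⟪graphPLap w p a - graphPLap w p b, a - b⟫ = ∑ i, ∑ j, T i j := by
    rw [PiLp.inner_apply]
    refine Finset.sum_congr rfl fun i _ => ?_
    simp only [RCLike.inner_apply, conj_trivial, PiLp.sub_apply, graphPLap, hT, phiP]
    rw [← Finset.sum_sub_distrib, Finset.mul_sum]
    exact Finset.sum_congr rfl fun j _ => by ring
  have hswap : ∑ i, ∑ j, T i j = ∑ i, ∑ j, T j i := Finset.sum_comm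
  have hterm : ∀ i j, T i j + T j i =
      w i j * ((phiP p (a i - a j) - phiP p (b i - b j)) * ((a i - a j) - (b i - b j))) := by
    intro i j
    have e1 : a j - a i = -(a i - a j) := by ring
    have e2 : b j - b i = -(b i - b j) := by ring
    simp only [hT, ← hsym i j, e1, e2, phiP_neg]
    ring
  have h2 : 2 * (∑ i, ∑ j, T i j) =
      ∑ i, ∑ j, w i j * ((phiP p (a i - a j) - phiP p (b i - b j)) * ((a i - a j) - (b i - b j))) := by
    calc 2 * (∑ i, ∑ j, T i j) = ∑ i, ∑ j, T i j + ∑ i, ∑ j, T j i := by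
          rw [← hswap]; ring
      _ = ∑ i, ∑ j, (T i j + T j i) := by
          rw [← Finset.sum_add_distrib]
          exact Finset.sum_congr rfl fun i _ => (Finset.sum_add_distrib).symm
      _ = _ := Finset.sum_congr rfl fun i _ => Finset.sum_congr rfl fun j _ => hterm i j
  have hnn : 0 ≤ ∑ i, ∑ j,
      w i j * ((phiP p (a i - a j) - phiP p (b i - b j)) * ((a i - a j) - (b i - b j))) :=
    Finset.sum_nonneg fun i _ => Finset.sum_nonneg fun j _ =>
      mul_nonneg (hw i j) (phiP_key hp _ _)
  rw [hinner]
  nlinarith [hnn, h2]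

/-- Continuous dependence on initial data under a one-sided Lipschitz reaction term. -/
theorem graphPLap_continuous_dependence {n : ℕ} (hn : 0 < n)
    (w : Fin n → Fin n → ℝ)
    (hsym : ∀ i j, w i j = w j i) (hw : ∀ i j, 0 ≤ w i j) (p : ℝ) (hp : 2 ≤ p)
    (F : EuclideanSpace ℝ (Fin n) → EuclideanSpace ℝ (Fin n)) (C_F : ℝ)
    (hF : ∀ a b : EuclideanSpace ℝ (Fin n), ⟪F a - F b, a - b⟫ ≤ C_F * ‖a - b‖ ^ 2)
    (u v : ℝ → EuclideanSpace ℝ (Fin n))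
    (hu : ∀ t : ℝ, 0 ≤ t → HasDerivAt u (-(graphPLap w p (u t)) + F (u t)) t)
    (hv : ∀ t : ℝ, 0 ≤ t → HasDerivAt v (-(graphPLap w p (v t)) + F (v t)) t) :
    ∀ t : ℝ, 0 ≤ t → ‖u t - v t‖ ≤ Real.exp (C_F * t) * ‖u 0 - v 0‖ := by
  intro t ht
  set D : ℝ → EuclideanSpace ℝ (Fin n) := fun s => u s - v s with hDdef
  set dD : ℝ → EuclideanSpace ℝ (Fin n) :=
    fun s => -(graphPLap w p (u s) - graphPLap w p (v s)) + (F (u s) - F (v s)) with hdDdef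
  have hD : ∀ s : ℝ, 0 ≤ s → HasDerivAt D (dD s) s := by
    intro s hs
    have h := (hu s hs).sub (hv s hs)
    refine h.congr_deriv ?_
    simp only [hdDdef]
    abel
  set g : ℝ → ℝ := fun s => ⟪D s, D s⟫ with hgdef
  have hg : ∀ s : ℝ, 0 ≤ s → HasDerivAt g (2 * ⟪dD s, D s⟫) s := by
    intro s hs
    have h := HasDerivAt.inner ℝ (hD s hs) (hD s hs)
    refine h.congr_deriv ?_
    rw [real_inner_comm (D s) (dD s)]
    ring
  have hgbound : ∀ s : ℝ, 0 ≤ s → 2 * ⟪dD s, D s⟫ ≤ 2 * C_F * g s := by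
    intro s hs
    have h1 : ⟪dD s, D s⟫ = -⟪graphPLap w p (u s) - graphPLap w p (v s), D s⟫
        + ⟪F (u s) - F (v s), D s⟫ := by
      simp only [hdDdef, inner_add_left, inner_neg_left]
    have h2 := graphPLap_monotone w hsym hw hp (u s) (v s)
    have h3 := hF (u s) (v s)
    have h4 : g s = ‖D s‖ ^ 2 := real_inner_self_eq_norm_sq (D s)
    rw [h4]
    have hDs : D s = u s - v s := rfl
    rw [h1]
    nlinarith [h2, h3]
  set φ : ℝ → ℝ := fun s => Real.exp (-(2 * C_F) * s) * g s with hφdef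
  have hφderiv : ∀ s : ℝ, 0 ≤ s → HasDerivAt φ
      (-(2 * C_F) * Real.exp (-(2 * C_F) * s) * g s
        + Real.exp (-(2 * C_F) * s) * (2 * ⟪dD s, D s⟫)) s := by
    intro s hs
    have hexp : HasDerivAt (fun x : ℝ => Real.exp (-(2 * C_F) * x))
        (-(2 * C_F) * Real.exp (-(2 * C_F) * s)) s := by
      have h := ((hasDerivAt_id s).const_mul (-(2 * C_F))).exp
      simpa [mul_comm] using h
    exact hexp.mul (hg s hs)
  have hanti : AntitoneOn φ (Set.Ici (0 : ℝ)) := by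
    apply antitoneOn_of_deriv_nonpos (convex_Ici 0)
    · intro s hs
      exact ((hφderiv s hs).continuousAt).continuousWithinAt
    · intro s hs
      rw [interior_Ici] at hs
      exact ((hφderiv s (le_of_lt hs)).differentiableAt).differentiableWithinAt
    · intro s hs
      rw [interior_Ici] at hs
      rw [(hφderiv s hs.le).deriv]
      have hb := hgbound s hs.le
      have hgnn : 0 ≤ g s := real_inner_self_nonneg
      have hexp : 0 < Real.exp (-(2 * C_F) * s) := Real.exp_pos _
      nlinarith
  have hkey : φ t ≤ φ 0 := hanti (Set.self_mem_Ici) ht ht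
  have hφ0 : φ 0 = g 0 := by simp [hφdef]
  have hgt : g t = ‖D t‖ ^ 2 := real_inner_self_eq_norm_sq (D t)
  have hg0 : g 0 = ‖D 0‖ ^ 2 := real_inner_self_eq_norm_sq (D 0)
  have hexp : 0 < Real.exp (-(2 * C_F) * t) := Real.exp_pos _
  have hsq : ‖D t‖ ^ 2 ≤ (Real.exp (C_F * t) * ‖D 0‖) ^ 2 := by
    have h1 : Real.exp (-(2 * C_F) * t) * ‖D t‖ ^ 2 ≤ ‖D 0‖ ^ 2 := by
      rw [hφ0, hg0] at hkey
      calc Real.exp (-(2 * C_F) * t) * ‖D t‖ ^ 2 = φ t := by simp only [hφdef]; rw [hgt]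
        _ ≤ ‖D 0‖ ^ 2 := hkey
    have h2 : Real.exp (C_F * t) ^ 2 * Real.exp (-(2 * C_F) * t) = 1 := by
      rw [sq, ← Real.exp_add, ← Real.exp_add]
      ring_nf
      exact Real.exp_zero
    calc ‖D t‖ ^ 2 = Real.exp (C_F * t) ^ 2 * (Real.exp (-(2 * C_F) * t) * ‖D t‖ ^ 2) := by
          rw [← mul_assoc, h2, one_mul]
      _ ≤ Real.exp (C_F * t) ^ 2 * ‖D 0‖ ^ 2 := by
          apply mul_le_mul_of_nonneg_left h1 (sq_nonneg _)
      _ = (Real.exp (C_F * t) * ‖D 0‖) ^ 2 := (mul_pow _ _ 2).symm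
  have := Real.sqrt_le_sqrt hsq
  rwa [Real.sqrt_sq (norm_nonneg _), Real.sqrt_sq (by positivity)] at this
end
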